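/- Let M be a loopless matroid on ground set E, and let F be a proper nonempty flat of M. Then the initial matroid M_{v_F} (with respect to the indicator vector v_F of F) equals the direct sum (M|F) ⊕ (M/F). -/

import Mathlib

open Polynomial

namespace MatroidZeta

open scoped Classical

variable {α : Type*}

/-- The `q`-analogue `[n]_q = 1 + q + ⋯ + q^(n-1)` of a natural number `n`, in `ℤ[q]`. -/
noncomputable def qAnalogue (n : ℕ) : Polynomial ℤ := ∑ i ∈ Finset.range n, X ^ i

/-- The rank of a set `X` in a matroid `M`: the largest size of an independent subset of `X`. -/
noncomputable def rk (M : Matroid α) (X : Set α) : ℕ :=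
  sSup {n | ∃ I, M.Indep I ∧ I ⊆ X ∧ I.ncard = n}

/-- Contraction `M / C` of a matroid, defined as the dual of the deletion of `C`
from the dual matroid. -/
noncomputable def contract (M : Matroid α) (C : Set α) : Matroid α :=
  ((M✶.restrict (M✶.E \ C))✶)

/-- A matroid is loopless if no element of the ground set lies in the closure of `∅`. -/
def Loopless (M : Matroid α) : Prop := M.closure ∅ = ∅

/-- The characteristic polynomial `χ_M(q) = ∑_{S ⊆ E} (-1)^{#S} q^(rk M - rk S)`. -/
noncomputable def charPoly (M : Matroid α) : Polynomial ℤ :=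
  ∑ᶠ S ∈ {S : Set α | S ⊆ M.E}, (-1 : ℤ) ^ S.ncard • (X : Polynomial ℤ) ^ (rk M M.E - rk M S)

/-- The reduced characteristic polynomial
`χ̄_M(q) = χ_M(q)/(q-1) = ∑_{S ⊆ E} (-1)^{#S} [rk M - rk S]_q`. -/
noncomputable def redCharPoly (M : Matroid α) : Polynomial ℤ :=
  ∑ᶠ S ∈ {S : Set α | S ⊆ M.E}, (-1 : ℤ) ^ S.ncard • qAnalogue (rk M M.E - rk M S)

/-- `wt_M(w) = max_{B basis of M} ∑_{e ∈ B} w e`. -/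
noncomputable def wt (M : Matroid α) (w : α → ℝ) : ℝ :=
  sSup {x | ∃ B, M.IsBase B ∧ x = ∑ᶠ e ∈ B, w e}

/-- The initial matroid `M_w`: the matroid on the ground set of `M` whose bases are the
bases of `M` of maximal `w`-weight.  (Such a matroid exists and is unique.) -/
noncomputable def initialMatroid (M : Matroid α) (w : α → ℝ) : Matroid α :=
  if h : ∃ N : Matroid α, N.E = M.E ∧
      ∀ B, N.IsBase B ↔ M.IsBase B ∧ ∑ᶠ e ∈ B, w e = wt M w
  then h.choose else M

section Helpers
open Set

lemma contract_ground (M : Matroid α) (C : Set α) : (contract M C).E = M.E \ C := by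
  simp [contract]

lemma ncard_le_of_indep_subset {M : Matroid α} (hE : M.E.Finite) {I X F : Set α}
    (hI : M.IsBasis I F) (hX : M.Indep X) (hXF : X ⊆ F) : X.ncard ≤ I.ncard := by
  obtain ⟨J, hJ, hXJ⟩ := hX.subset_isBasis_of_subset hXF hI.subset_ground
  have hJfin : J.Finite := hE.subset hJ.left_subset_ground
  have hcard : J.ncard = I.ncard := by
    have := hJ.encard_eq_encard hI
    rw [Set.ncard_def, Set.ncard_def, this]
  exact hcard ▸ Set.ncard_le_ncard hXJ hJfin

lemma contract_base_iff {M : Matroid α} (hE : M.E.Finite) {F I B : Set α}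
    (hI : M.IsBasis I F) :
    (contract M F).IsBase B ↔ B ⊆ M.E \ F ∧ M.IsBase (B ∪ I) := by
  have hFE : F ⊆ M.E := hI.subset_ground
  have hIF : I ⊆ F := hI.subset
  have hres : (M✶.restrict (M✶.E \ F)).E = M.E \ F := by simp
  rw [contract, Matroid.dual_isBase_iff', hres]
  rw [Matroid.isBase_restrict_iff (show M✶.E \ F ⊆ M✶.E from diff_subset)]
  simp only [Matroid.dual_ground]
  constructor
  · rintro ⟨hJ, hB⟩
    refine ⟨hB, ?_⟩
    set J := (M.E \ F) \ B with hJdef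
    obtain ⟨B₀, hB₀, hJB₀⟩ := (Matroid.dual_indep_iff_exists'.1 hJ.indep).2
    obtain ⟨B₁, hB₁, hIB₁, hB₁sub⟩ := hI.indep.exists_isBase_subset_union_isBase hB₀
    have hB₁F : B₁ ∩ F = I :=
      (hI.eq_of_subset_indep (hB₁.indep.inter_right F)
        (subset_inter hIB₁ hIF) inter_subset_right).symm
    have hBB₁ : B ⊆ B₁ := by
      intro e heB
      by_contra heB₁
      have heEF : e ∈ M.E \ F := hB heB
      have hJdisj : Disjoint (insert e J) B₁ := by
        rw [Set.disjoint_left]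
        rintro x (rfl | hxJ) hxB₁
        · exact heB₁ hxB₁
        · rcases hB₁sub hxB₁ with hxI | hxB₀
          · exact hxJ.1.2 (hIF hxI)
          · exact (Set.disjoint_left.1 hJB₀ hxJ) hxB₀
      have hind : M✶.Indep (insert e J) := by
        rw [Matroid.dual_indep_iff_exists']
        exact ⟨insert_subset heEF.1 (fun x hx => hx.1.1),
          ⟨B₁, hB₁, hJdisj⟩⟩
      have := hJ.mem_of_insert_indep heEF hind
      exact this.2 heB
    have hB₁BI : B₁ = B ∪ I := by
      apply Set.Subset.antisymm
      · intro x hx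
        rcases hB₁sub hx with hxI | hxB₀
        · exact Or.inr hxI
        · by_cases hxF : x ∈ F
          · exact Or.inr (hB₁F ▸ ⟨hx, hxF⟩)
          · have hxJ : x ∉ J := fun h => (Set.disjoint_left.1 hJB₀ h) hxB₀
            have : x ∈ M.E \ F := ⟨hB₀.subset_ground hxB₀, hxF⟩
            exact Or.inl (by_contra fun hxB => hxJ ⟨this, hxB⟩)
      · exact union_subset hBB₁ hIB₁
    exact hB₁BI ▸ hB₁
  · rintro ⟨hB, hBI⟩
    refine ⟨?_, hB⟩
    set J := (M.E \ F) \ B with hJdef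
    have hJE : J ⊆ M.E := fun x hx => hx.1.1
    have hJind : M✶.Indep J := by
      rw [Matroid.dual_indep_iff_exists']
      refine ⟨hJE, B ∪ I, hBI, ?_⟩
      rw [Set.disjoint_left]
      rintro x hxJ (hxB | hxI)
      · exact hxJ.2 hxB
      · exact hxJ.1.2 (hIF hxI)
    apply hJind.isBasis_of_forall_insert (fun x hx => hx.1)
    intro e he
    have heB : e ∈ B := by
      rcases he with ⟨heEF, heJ⟩
      by_contra heB
      exact heJ ⟨heEF, heB⟩
    rw [Matroid.Dep, Matroid.dual_ground]
    refine ⟨?_, insert_subset (he.1.1) hJE⟩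
    rw [Matroid.dual_indep_iff_exists']
    rintro ⟨-, B', hB', hdisj⟩
    -- cardinality contradiction
    have hBfin : B.Finite := hE.subset (hB.trans diff_subset)
    have hIfin : I.Finite := hE.subset hI.left_subset_ground
    have hB'fin : B'.Finite := hE.subset hB'.subset_ground
    have hB'sub : B' ⊆ (B \ {e}) ∪ F := by
      intro x hx
      by_cases hxF : x ∈ F
      · exact Or.inr hxF
      · have hxEF : x ∈ M.E \ F := ⟨hB'.subset_ground hx, hxF⟩
        have hxJ : x ∉ insert e J := fun h => (Set.disjoint_left.1 hdisj h) hx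
        have hxe : x ≠ e := fun h => hxJ (h ▸ mem_insert _ _)
        have hxB : x ∈ B := by
          by_contra hxB
          exact hxJ (Set.mem_insert_of_mem _ ⟨hxEF, hxB⟩)
        exact Or.inl ⟨hxB, hxe⟩
    have h1 : B'.ncard ≤ (B \ {e}).ncard + (B' ∩ F).ncard := by
      calc B'.ncard ≤ ((B \ {e}) ∪ (B' ∩ F)).ncard := by
            apply Set.ncard_le_ncard _ ((hBfin.diff (t := {e})).union (hB'fin.inter_of_left _))
            intro x hx
            rcases hB'sub hx with h | h
            · exact Or.inl h
            · exact Or.inr ⟨hx, h⟩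
        _ ≤ (B \ {e}).ncard + (B' ∩ F).ncard :=
            Set.ncard_union_le _ _
    have h2 : (B' ∩ F).ncard ≤ I.ncard :=
      ncard_le_of_indep_subset hE hI (hB'.indep.inter_right F) inter_subset_right
    have h3 : (B \ {e}).ncard < B.ncard := Set.ncard_diff_singleton_lt_of_mem heB hBfin
    have h4 : B'.ncard = (B ∪ I).ncard := hB'.ncard_eq_ncard_of_isBase hBI
    have h5 : (B ∪ I).ncard = B.ncard + I.ncard := by
      rw [Set.ncard_union_eq _ hBfin hIfin]
      rw [Set.disjoint_left]
      exact fun x hxB hxI => (hB hxB).2 (hIF hxI)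
    omega


lemma finsum_indicator {B F : Set α} (hB : B.Finite) :
    ∑ᶠ e ∈ B, (if e ∈ F then (1 : ℝ) else 0) = ((B ∩ F).ncard : ℝ) := by
  have h1 : ∑ᶠ e ∈ B, (if e ∈ F then (1 : ℝ) else 0)
      = ∑ e ∈ hB.toFinset, (if e ∈ F then (1 : ℝ) else 0) := by
    rw [← finsum_mem_coe_finset, hB.coe_toFinset]
  rw [h1, Finset.sum_boole]
  congr 1
  have h : B ∩ F = ↑(hB.toFinset.filter (· ∈ F)) := by
    ext x; simp [Set.Finite.mem_toFinset]
  rw [h, Set.ncard_coe_finset]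

end Helpers

/-- A flag of non-minimal flats of `M`: a chain of flats strictly above `cl(∅)`. -/
def IsFlag (M : Matroid α) (C : Finset (Set α)) : Prop :=
  (∀ F ∈ C, M.IsFlat F ∧ M.closure ∅ ⊂ F) ∧ IsChain (· ⊆ ·) (C : Set (Set α))

/-- `N(M)`: the set of flags of non-minimal flats of `M`. -/
def flags (M : Matroid α) : Set (Finset (Set α)) := {C | IsFlag M C}

/-- `N°(M)`: flags not containing the ground set. -/
def flagsCirc (M : Matroid α) : Set (Finset (Set α)) := {C | IsFlag M C ∧ M.E ∉ C}

/-- `N*(M)`: flags containing the ground set. -/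
def flagsStar (M : Matroid α) : Set (Finset (Set α)) := {C | IsFlag M C ∧ M.E ∈ C}

/-- `z_C(F)`: the largest member of the chain `C` strictly below `F` (or `∅` if none). -/
def zmin (C : Finset (Set α)) (F : Set α) : Set α := ⋃₀ {G | G ∈ C ∧ G ⊂ F}

/-- The weight vector `∑_{F ∈ C} v_F`, a point in the relative interior of the cone `σ_C`. -/
noncomputable def flagWeight (C : Finset (Set α)) : α → ℝ :=
  fun e => ∑ F ∈ C, if e ∈ F then (1 : ℝ) else 0

/-- The initial matroid `M_C` of a flag `C`. -/
noncomputable def flagMatroid (M : Matroid α) (C : Finset (Set α)) : Matroid α :=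
  initialMatroid M (flagWeight C)


theorem initialMatroid_indicator_eq_disjointSum (M : Matroid α) (hE : M.E.Finite)
    (hM : Loopless M) {F : Set α} (hF : M.IsFlat F) (hFne : F.Nonempty) (hFE : F ⊂ M.E)
    (hdis : Disjoint (M.restrict F).E (contract M F).E) :
    initialMatroid M (fun e => if e ∈ F then (1 : ℝ) else 0) =
      Matroid.disjointSum (M.restrict F) (contract M F) hdis := by
  classical
  set w : α → ℝ := fun e => if e ∈ F then (1 : ℝ) else 0 with hw
  have hFE : F ⊆ M.E := hF.subset_ground.trans (le_refl _)
  obtain ⟨I₀, hI₀⟩ := M.exists_isBasis F hFE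
  have hI₀fin : I₀.Finite := hE.subset hI₀.left_subset_ground
  -- weight of any base
  have hwt_base : ∀ ⦃B⦄, M.IsBase B → ∑ᶠ e ∈ B, w e = ((B ∩ F).ncard : ℝ) := by
    intro B hB
    exact finsum_indicator (hE.subset hB.subset_ground)
  have hbound : ∀ ⦃B⦄, M.IsBase B → (B ∩ F).ncard ≤ I₀.ncard := fun B hB =>
    ncard_le_of_indep_subset hE hI₀ (hB.indep.inter_right F) Set.inter_subset_right
  -- a base achieving the bound
  obtain ⟨B₀, hB₀, hIB₀⟩ := hI₀.indep.exists_isBase_superset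
  have hB₀F : B₀ ∩ F = I₀ :=
    (hI₀.eq_of_subset_indep (hB₀.indep.inter_right F)
      (Set.subset_inter hIB₀ hI₀.subset) Set.inter_subset_right).symm
  -- the set of weights
  set S : Set ℝ := {x | ∃ B, M.IsBase B ∧ x = ∑ᶠ e ∈ B, w e} with hS
  have hSne : S.Nonempty := ⟨_, B₀, hB₀, rfl⟩
  have hSub : ∀ x ∈ S, x ≤ (I₀.ncard : ℝ) := by
    rintro x ⟨B, hB, rfl⟩
    rw [hwt_base hB]
    exact_mod_cast hbound hB
  have hwtval : wt M w = (I₀.ncard : ℝ) := by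
    apply le_antisymm
    · exact csSup_le hSne hSub
    · apply le_csSup ⟨_, hSub⟩
      exact ⟨B₀, hB₀, by rw [hwt_base hB₀, hB₀F]⟩
  -- characterization of weight-maximal bases
  have hkey : ∀ B : Set α,
      (Matroid.disjointSum (M.restrict F) (contract M F) hdis).IsBase B ↔
        M.IsBase B ∧ ∑ᶠ e ∈ B, w e = wt M w := by
    intro B
    rw [Matroid.disjointSum_isBase_iff]
    have hgr : (M.restrict F).E = F := rfl
    have hgc : (contract M F).E = M.E \ F := contract_ground M F
    rw [hgr, hgc]
    rw [Matroid.isBase_restrict_iff hFE]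
    constructor
    · rintro ⟨h1, h2, h3⟩
      rw [contract_base_iff hE h1] at h2
      have hBE : B ⊆ M.E := by
        intro x hx
        rcases h3 hx with h | h
        · exact hFE h
        · exact h.1
      have hBeq : (B ∩ (M.E \ F)) ∪ (B ∩ F) = B := by
        ext x
        simp only [Set.mem_union, Set.mem_inter_iff, Set.mem_diff]
        constructor
        · rintro (⟨h, -⟩ | ⟨h, -⟩) <;> exact h
        · intro hx
          by_cases hxF : x ∈ F
          · exact Or.inr ⟨hx, hxF⟩
          · exact Or.inl ⟨hx, hBE hx, hxF⟩
      have hBbase : M.IsBase B := hBeq ▸ h2.2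
      refine ⟨hBbase, ?_⟩
      rw [hwt_base hBbase, hwtval]
      congr 1
      have := h1.encard_eq_encard hI₀
      rw [Set.ncard_def, Set.ncard_def, this]
    · rintro ⟨hB, hw⟩
      rw [hwt_base hB, hwtval] at hw
      have hcard : (B ∩ F).ncard = I₀.ncard := by exact_mod_cast hw
      have hBFfin : (B ∩ F).Finite := hE.subset ((Set.inter_subset_left).trans hB.subset_ground)
      -- B ∩ F is a basis of F
      have h1 : M.IsBasis (B ∩ F) F := by
        obtain ⟨J, hJ, hBFJ⟩ :=
          (hB.indep.inter_right F).subset_isBasis_of_subset Set.inter_subset_right hFE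
        have hJfin : J.Finite := hE.subset hJ.left_subset_ground
        have hJcard : J.ncard = I₀.ncard := by
          have := hJ.encard_eq_encard hI₀
          rw [Set.ncard_def, Set.ncard_def, this]
        have : B ∩ F = J := Set.eq_of_subset_of_ncard_le hBFJ (by omega) hJfin
        rwa [this]
      refine ⟨h1, ?_, ?_⟩
      · rw [contract_base_iff hE h1]
        refine ⟨Set.inter_subset_right, ?_⟩
        have hBeq : (B ∩ (M.E \ F)) ∪ (B ∩ F) = B := by
          ext x
          simp only [Set.mem_union, Set.mem_inter_iff, Set.mem_diff]
          constructor
          · rintro (⟨h, -⟩ | ⟨h, -⟩) <;> exact h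
          · intro hx
            by_cases hxF : x ∈ F
            · exact Or.inr ⟨hx, hxF⟩
            · exact Or.inl ⟨hx, hB.subset_ground hx, hxF⟩
        rw [hBeq]
        exact hB
      · intro x hx
        by_cases hxF : x ∈ F
        · exact Or.inl hxF
        · exact Or.inr ⟨hB.subset_ground hx, hxF⟩
  -- existence of the initial matroid
  have hex : ∃ N : Matroid α, N.E = M.E ∧
      ∀ B, N.IsBase B ↔ M.IsBase B ∧ ∑ᶠ e ∈ B, w e = wt M w := by
    refine ⟨Matroid.disjointSum (M.restrict F) (contract M F) hdis, ?_, hkey⟩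
    rw [Matroid.disjointSum_ground_eq]
    have hgr : (M.restrict F).E = F := rfl
    have hgc : (contract M F).E = M.E \ F := contract_ground M F
    rw [hgr, hgc, Set.union_diff_cancel hFE]
  rw [initialMatroid, dif_pos hex]
  obtain ⟨hEeq, hBiff⟩ := hex.choose_spec
  apply Matroid.ext_isBase
  · rw [hEeq, Matroid.disjointSum_ground_eq]
    have hgc : (contract M F).E = M.E \ F := contract_ground M F
    rw [show (M.restrict F).E = F from rfl, hgc, Set.union_diff_cancel hFE]
  · intro B _
    rw [hBiff, hkey]

end MatroidZeta
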